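/- On Euclidean space ℝⁿ (n ≥ 1) with the standard metric, the volume form α = dx¹ ∧ ⋯ ∧ dxⁿ is exact but not d(bounded): there is no (n−1)-form β with dβ = α and sup_{x∈ℝⁿ} |β(x)| < ∞. -/

import Mathlib

open scoped BigOperators

open scoped BigOperators
open MeasureTheory Set

lemma eucl_abs_apply_le_norm {k : ℕ} (y : EuclideanSpace ℝ (Fin k)) (i : Fin k) :
    |y i| ≤ ‖y‖ := by
  rw [EuclideanSpace.norm_eq]
  have : |y i| = Real.sqrt (|y i| ^ 2) := by
    rw [Real.sqrt_sq_eq_abs, abs_abs]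
  rw [this]
  apply Real.sqrt_le_sqrt
  exact Finset.single_le_sum (f := fun j => |y j| ^ 2)
    (fun j _ => sq_nonneg _) (Finset.mem_univ i)

-- existence part, generic
lemma exact_part (n : ℕ) (hn : 1 ≤ n) :
    ∃ X : EuclideanSpace ℝ (Fin n) → EuclideanSpace ℝ (Fin n),
      ContDiff ℝ 1 X ∧
      ∀ x, ∑ i, fderiv ℝ X x (EuclideanSpace.single i 1) i = 1 := by
  set c : ℝ := (n : ℝ)⁻¹ with hc
  refine ⟨fun x => c • x, (contDiff_id.const_smul c), fun x => ?_⟩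
  have hD : HasFDerivAt (fun x : EuclideanSpace ℝ (Fin n) => c • x)
      (c • ContinuousLinearMap.id ℝ (EuclideanSpace ℝ (Fin n))) x :=
    (hasFDerivAt_id x).const_smul c
  rw [hD.fderiv]
  have hone : ∀ i : Fin n, (EuclideanSpace.single i (1:ℝ)) i = 1 := by
    intro i; simp [EuclideanSpace.single_apply]
  simp only [ContinuousLinearMap.smul_apply, ContinuousLinearMap.id_apply,
    PiLp.smul_apply, smul_eq_mul]
  rw [Finset.sum_congr rfl (fun i _ => by rw [hone i])]
  simp only [mul_one, Finset.sum_const, Finset.card_univ, Fintype.card_fin, nsmul_eq_mul]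
  field_simp [hc]
  rw [hc]; exact mul_inv_cancel₀ (by exact_mod_cast (show n ≠ 0 by omega))

lemma no_bounded (m : ℕ) :
    ¬ ∃ X : EuclideanSpace ℝ (Fin (m+1)) → EuclideanSpace ℝ (Fin (m+1)),
      ContDiff ℝ 1 X ∧
      (∀ x, ∑ i, fderiv ℝ X x (EuclideanSpace.single i 1) i = 1) ∧
      ∃ K : ℝ, ∀ x, ‖X x‖ ≤ K := by
  rintro ⟨X, hX, hdiv, K, hK⟩
  have hK0 : 0 ≤ K := le_trans (norm_nonneg _) (hK 0)
  set eL : EuclideanSpace ℝ (Fin (m+1)) ≃L[ℝ] (Fin (m+1) → ℝ) :=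
    EuclideanSpace.equiv (Fin (m+1)) ℝ with heL
  set R : ℝ := (m + 1) * K + 1 with hR
  have hRpos : 0 < R := by positivity
  set a : Fin (m+1) → ℝ := fun _ => -R
  set b : Fin (m+1) → ℝ := fun _ => R
  have hab : a ≤ b := fun i => by simp [a, b]; linarith
  set f : (Fin (m+1) → ℝ) → (Fin (m+1) → ℝ) := fun x => eL (X (eL.symm x)) with hf
  set f' : (Fin (m+1) → ℝ) → (Fin (m+1) → ℝ) →L[ℝ] (Fin (m+1) → ℝ) :=
    fun x => (eL : EuclideanSpace ℝ (Fin (m+1)) →L[ℝ] (Fin (m+1) → ℝ)).comp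
      ((fderiv ℝ X (eL.symm x)).comp
        (eL.symm : (Fin (m+1) → ℝ) →L[ℝ] EuclideanSpace ℝ (Fin (m+1)))) with hf'
  have hXd : Differentiable ℝ X := hX.differentiable one_ne_zero
  have hder : ∀ x, HasFDerivAt f (f' x) x := by
    intro x
    exact (eL.hasFDerivAt).comp _ (((hXd (eL.symm x)).hasFDerivAt).comp _ eL.symm.hasFDerivAt)
  have hdiv' : ∀ x : Fin (m+1) → ℝ, ∑ i, f' x (Pi.single i 1) i = 1 := by
    intro x
    have : ∀ i : Fin (m+1), f' x (Pi.single i 1) i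
        = fderiv ℝ X (eL.symm x) (EuclideanSpace.single i 1) i := by
      intro i
      simp only [hf', ContinuousLinearMap.comp_apply, ContinuousLinearEquiv.coe_coe]
      congr 1
    rw [Finset.sum_congr rfl fun i _ => this i]
    exact hdiv (eL.symm x)
  have key := MeasureTheory.integral_divergence_of_hasFDerivAt_off_countable a b hab
    f f' ∅ countable_empty
    (fun x _ => (hder x).continuousAt.continuousWithinAt)
    (fun x _ => hder x)
    (by
      apply MeasureTheory.IntegrableOn.congr_fun
        (MeasureTheory.integrableOn_const_iff (C := (1:ℝ)).2 (Or.inr ?_)) (fun x _ => (hdiv' x).symm)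
        measurableSet_Icc
      exact (isCompact_Icc).measure_lt_top)
  have hLHS : (∫ x in Icc a b, ∑ i, f' x (Pi.single i 1) i) = (2*R)^(m+1) := by
    rw [setIntegral_congr_fun measurableSet_Icc (fun x _ => hdiv' x), setIntegral_const,
      smul_eq_mul, mul_one, measureReal_def, Real.volume_Icc_pi_toReal hab]
    simp only [a, b, sub_neg_eq_add, Finset.prod_const, Finset.card_univ, Fintype.card_fin]
    ring
  have hface : ∀ (i : Fin (m+1)) (c : ℝ),
      ‖∫ x in Icc (a ∘ i.succAbove) (b ∘ i.succAbove), f (i.insertNth c x) i‖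
        ≤ K * (2*R)^m := by
    intro i c
    have hb : ∀ y : Fin (m+1) → ℝ, ‖f y i‖ ≤ K := by
      intro y
      have h1 : f y i = X (eL.symm y) i := rfl
      rw [Real.norm_eq_abs, h1]
      exact le_trans (eucl_abs_apply_le_norm _ i) (hK _)
    have hvol : (volume (Icc (a ∘ i.succAbove) (b ∘ i.succAbove))).toReal = (2*R)^m := by
      rw [Real.volume_Icc_pi_toReal (a := a ∘ i.succAbove) (b := b ∘ i.succAbove) (fun j => hab (i.succAbove j))]
      simp only [a, b, Function.comp_apply, sub_neg_eq_add, Finset.prod_const,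
        Finset.card_univ, Fintype.card_fin]
      ring
    calc ‖∫ x in Icc (a ∘ i.succAbove) (b ∘ i.succAbove), f (i.insertNth c x) i‖
        ≤ K * (volume (Icc (a ∘ i.succAbove) (b ∘ i.succAbove))).toReal :=
          norm_setIntegral_le_of_norm_le_const (isCompact_Icc).measure_lt_top
            (fun x _ => hb _)
      _ = K * (2*R)^m := by rw [hvol]
  have hRHS : (2*R)^(m+1) ≤ (m+1 : ℝ) * (2 * (K * (2*R)^m)) := by
    rw [← hLHS, key]
    calc ∑ i : Fin (m+1), ((∫ x in Icc (a ∘ i.succAbove) (b ∘ i.succAbove),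
            f (i.insertNth (b i) x) i)
          - ∫ x in Icc (a ∘ i.succAbove) (b ∘ i.succAbove), f (i.insertNth (a i) x) i)
        ≤ ∑ _i : Fin (m+1), 2 * (K * (2*R)^m) := by
          apply Finset.sum_le_sum
          intro i _
          calc _ ≤ ‖(∫ x in Icc (a ∘ i.succAbove) (b ∘ i.succAbove), f (i.insertNth (b i) x) i)
              - ∫ x in Icc (a ∘ i.succAbove) (b ∘ i.succAbove), f (i.insertNth (a i) x) i‖ :=
                Real.le_norm_self _
            _ ≤ _ := by
                refine le_trans (norm_sub_le _ _) ?_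
                have := hface i (b i)
                have := hface i (a i)
                linarith
      _ = (m+1 : ℝ) * (2 * (K * (2*R)^m)) := by
          rw [Finset.sum_const, Finset.card_univ, Fintype.card_fin, nsmul_eq_mul]
          push_cast; ring
  have hpow : 0 < (2*R)^m := by positivity
  have h2 : 2*R ≤ (m+1 : ℝ) * (2 * K) := by
    have : (2*R) * (2*R)^m ≤ ((m+1 : ℝ) * (2 * K)) * (2*R)^m := by
      calc (2*R) * (2*R)^m = (2*R)^(m+1) := by ring
        _ ≤ (m+1 : ℝ) * (2 * (K * (2*R)^m)) := hRHS
        _ = ((m+1 : ℝ) * (2 * K)) * (2*R)^m := by ring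
    exact le_of_mul_le_mul_right this hpow
  rw [hR] at h2
  nlinarith [hK0]


/-- On Euclidean space `ℝⁿ` (`n ≥ 1`) with the standard
metric, the volume form `α = dx¹ ∧ ⋯ ∧ dxⁿ` is exact but not d(bounded).

Via the standard identification of an `(n-1)`-form `β` on `ℝⁿ` with a vector
field `X` (by contraction with the volume form), one has `dβ = (div X) α` and
`|β(x)| = ‖X x‖`.  Thus the statement reads: there exists a `C¹` vector field
`X` with `div X ≡ 1` (exactness, e.g. `X = x₁ e₁`), but there is no such `X`
which is in addition bounded (`sup_x ‖X x‖ < ∞`); the proof uses Stokes'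
theorem on large balls. -/
theorem volume_form_exact_not_dBounded (n : ℕ) (hn : 1 ≤ n) :
    (∃ X : EuclideanSpace ℝ (Fin n) → EuclideanSpace ℝ (Fin n),
      ContDiff ℝ 1 X ∧
      ∀ x, ∑ i, fderiv ℝ X x (EuclideanSpace.single i 1) i = 1) ∧
    ¬ ∃ X : EuclideanSpace ℝ (Fin n) → EuclideanSpace ℝ (Fin n),
      ContDiff ℝ 1 X ∧
      (∀ x, ∑ i, fderiv ℝ X x (EuclideanSpace.single i 1) i = 1) ∧
      ∃ K : ℝ, ∀ x, ‖X x‖ ≤ K := by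
  obtain ⟨m, rfl⟩ : ∃ m, n = m + 1 := ⟨n - 1, (Nat.succ_pred_eq_of_pos hn).symm⟩
  exact ⟨exact_part (m+1) hn, no_bounded m⟩
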